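/- Let Θ ⊂ ℝ^d with max_{θ∈Θ} ‖θ‖₂ ≤ S, let x ∈ ℝ^d with ‖x‖₂ ≤ 1, and let μ be the sigmoid. Then for any θ₁, θ₂ ∈ Θ: α(x, θ₁, θ₂) := ∫₀¹ μ'(v·xᵀθ₂ + (1-v)·xᵀθ₁) dv ≥ (1 + 2S)^{-1} · μ'(xᵀθ₁). -/

import Mathlib

open RealInnerProductSpace

noncomputable def sigmoid (x : ℝ) : ℝ := (1 + Real.exp (-x))⁻¹

noncomputable def sigmoid' (t : ℝ) : ℝ := Real.exp (-t) / (1 + Real.exp (-t)) ^ 2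

lemma one_add_exp_pos (t : ℝ) : 0 < 1 + Real.exp (-t) := by positivity

lemma hasDerivAt_sigmoid (t : ℝ) : HasDerivAt sigmoid (sigmoid' t) t := by
  have h1 : HasDerivAt (fun s : ℝ => Real.exp (-s)) (-Real.exp (-t)) t := by
    have := (Real.hasDerivAt_exp (-t)).comp t (hasDerivAt_neg t)
    simpa [Function.comp_def] using this
  have h2 : HasDerivAt (fun s : ℝ => 1 + Real.exp (-s)) (-Real.exp (-t)) t :=
    (h1.const_add 1)
  have hne : (1 + Real.exp (-t)) ≠ 0 := (one_add_exp_pos t).ne'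
  have := h2.inv hne
  unfold sigmoid
  simpa [sigmoid', neg_div, Pi.inv_def] using this

lemma deriv_sigmoid (t : ℝ) : deriv sigmoid t = sigmoid' t :=
  (hasDerivAt_sigmoid t).deriv

lemma sigmoid'_pos (t : ℝ) : 0 < sigmoid' t := by
  unfold sigmoid'
  positivity

lemma continuous_sigmoid' : Continuous sigmoid' := by
  unfold sigmoid'
  exact (Real.continuous_exp.comp continuous_neg).div
    (((continuous_const.add (Real.continuous_exp.comp continuous_neg)).pow 2))
    (fun t => by positivity)

lemma key (a s : ℝ) : sigmoid' a * Real.exp (-|s|) ≤ sigmoid' (a + s) := by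
  unfold sigmoid'
  have ea := Real.exp_pos (-a)
  have es := Real.exp_pos (-s)
  have hmul : Real.exp (-(a + s)) = Real.exp (-a) * Real.exp (-s) := by
    rw [← Real.exp_add]; ring_nf
  rw [hmul, div_mul_eq_mul_div, div_le_div_iff₀ (by positivity) (by positivity)]
  rcases le_or_gt 0 s with hs | hs
  · rw [abs_of_nonneg hs]
    have hesle : Real.exp (-s) ≤ 1 := Real.exp_le_one_iff.mpr (by linarith)
    have hle : Real.exp (-a) * Real.exp (-s) ≤ Real.exp (-a) := by nlinarith
    have h3 : (1 + Real.exp (-a) * Real.exp (-s)) ^ 2 ≤ (1 + Real.exp (-a)) ^ 2 := by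
      nlinarith [mul_pos ea es]
    nlinarith [mul_pos ea es]
  · rw [abs_of_neg hs]
    have h1 : 1 ≤ Real.exp (-s) := Real.one_le_exp_iff.mpr (by linarith)
    have hinv : Real.exp s = (Real.exp (-s))⁻¹ := by rw [← Real.exp_neg, neg_neg]
    rw [neg_neg, hinv]
    have hle2 : 1 + Real.exp (-a) * Real.exp (-s) ≤ Real.exp (-s) * (1 + Real.exp (-a)) := by
      nlinarith
    have h3 : (1 + Real.exp (-a) * Real.exp (-s)) ^ 2
        ≤ (Real.exp (-s) * (1 + Real.exp (-a))) ^ 2 := by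
      nlinarith [mul_pos ea es]
    rw [mul_comm (Real.exp (-a)) _, inv_mul_eq_div, div_mul_eq_mul_div, div_le_iff₀ es]
    nlinarith [mul_pos ea es]

lemma exp_integral_lb {c : ℝ} (hc : 0 ≤ c) :
    (1 + c)⁻¹ ≤ ∫ v in (0:ℝ)..1, Real.exp (-(c * v)) := by
  rcases eq_or_lt_of_le hc with hc0 | hc0
  · simp [← hc0]
  · have hF : ∀ v ∈ Set.uIcc (0:ℝ) 1,
        HasDerivAt (fun v : ℝ => -Real.exp (-(c * v)) / c) (Real.exp (-(c * v))) v := by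
      intro v _
      have h1 : HasDerivAt (fun v : ℝ => -(c * v)) (-c) v := by
        simpa [Pi.neg_def] using ((hasDerivAt_id v).const_mul c).neg
      have h2 : HasDerivAt (fun v : ℝ => Real.exp (-(c * v))) (Real.exp (-(c * v)) * (-c)) v :=
        (Real.hasDerivAt_exp _).comp v h1
      have := (h2.neg).div_const c
      convert this using 1
      · rfl
      · rfl
      · rfl
      · field_simp [hc0.ne']
    have hcont : IntervalIntegrable (fun v : ℝ => Real.exp (-(c * v)))
        MeasureTheory.volume 0 1 :=
      (Real.continuous_exp.comp (continuous_const.mul continuous_id).neg).intervalIntegrable 0 1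
    rw [intervalIntegral.integral_eq_sub_of_hasDerivAt hF hcont]
    have h := Real.add_one_le_exp c
    have hec : 0 < Real.exp (-c) := Real.exp_pos _
    have key1 : (1 + c) * Real.exp (-c) ≤ 1 := by
      calc (1 + c) * Real.exp (-c) ≤ Real.exp c * Real.exp (-c) :=
            mul_le_mul_of_nonneg_right (by linarith) hec.le
        _ = 1 := by rw [← Real.exp_add]; simp
    have hsub : -Real.exp (-(c * 1)) / c - -Real.exp (-(c * 0)) / c
        = (1 - Real.exp (-c)) / c := by
      simp only [mul_one, mul_zero, neg_zero, Real.exp_zero]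
      ring
    rw [hsub, le_div_iff₀ hc0, inv_mul_eq_div, div_le_iff₀ (by linarith : (0:ℝ) < 1 + c)]
    nlinarith

theorem alpha_lower_bound {d : ℕ} (Θ : Set (EuclideanSpace ℝ (Fin d)))
    (S : ℝ) (hS : 0 ≤ S) (hΘ : ∀ θ ∈ Θ, ‖θ‖ ≤ S)
    (x : EuclideanSpace ℝ (Fin d)) (hx : ‖x‖ ≤ 1)
    (θ₁ θ₂ : EuclideanSpace ℝ (Fin d)) (hθ₁ : θ₁ ∈ Θ) (hθ₂ : θ₂ ∈ Θ) :
    (1 + 2 * S)⁻¹ * deriv sigmoid ⟪x, θ₁⟫ ≤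
      ∫ v in (0:ℝ)..1, deriv sigmoid (v * ⟪x, θ₂⟫ + (1 - v) * ⟪x, θ₁⟫) := by
  set a : ℝ := ⟪x, θ₁⟫ with ha
  set b : ℝ := ⟪x, θ₂⟫ with hb
  set δ : ℝ := b - a with hδdef
  set c : ℝ := |δ| with hcdef
  have hc0 : 0 ≤ c := abs_nonneg _
  have hc2S : c ≤ 2 * S := by
    have : b - a = ⟪x, θ₂ - θ₁⟫ := by rw [inner_sub_right]
    have h1 : |⟪x, θ₂ - θ₁⟫| ≤ ‖x‖ * ‖θ₂ - θ₁‖ := abs_real_inner_le_norm x (θ₂ - θ₁)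
    have h2 : ‖θ₂ - θ₁‖ ≤ 2 * S := by
      calc ‖θ₂ - θ₁‖ ≤ ‖θ₂‖ + ‖θ₁‖ := norm_sub_le _ _
        _ ≤ 2 * S := by have := hΘ θ₁ hθ₁; have := hΘ θ₂ hθ₂; linarith
    have hxnn : (0:ℝ) ≤ ‖x‖ := norm_nonneg _
    calc c = |⟪x, θ₂ - θ₁⟫| := by rw [hcdef, hδdef, this]
      _ ≤ ‖x‖ * ‖θ₂ - θ₁‖ := h1
      _ ≤ 1 * (2 * S) := mul_le_mul hx h2 (norm_nonneg _) zero_le_one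
      _ = 2 * S := one_mul _
  -- rewrite the integrand
  have hrw : (∫ v in (0:ℝ)..1, deriv sigmoid (v * b + (1 - v) * a))
      = ∫ v in (0:ℝ)..1, sigmoid' (a + v * δ) := by
    apply intervalIntegral.integral_congr
    intro v _
    show deriv sigmoid (v * b + (1 - v) * a) = sigmoid' (a + v * δ)
    rw [deriv_sigmoid]
    congr 1
    rw [hδdef]
    ring
  rw [hrw, deriv_sigmoid]
  have hint1 : IntervalIntegrable (fun v : ℝ => sigmoid' a * Real.exp (-(c * v)))
      MeasureTheory.volume 0 1 :=
    ((continuous_const.mul ((Real.continuous_exp.comp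
      (continuous_const.mul continuous_id).neg)))).intervalIntegrable 0 1
  have hint2 : IntervalIntegrable (fun v : ℝ => sigmoid' (a + v * δ))
      MeasureTheory.volume 0 1 :=
    (continuous_sigmoid'.comp (continuous_const.add (continuous_id.mul continuous_const))).intervalIntegrable 0 1
  have hmono : (∫ v in (0:ℝ)..1, sigmoid' a * Real.exp (-(c * v)))
      ≤ ∫ v in (0:ℝ)..1, sigmoid' (a + v * δ) := by
    apply intervalIntegral.integral_mono_on zero_le_one hint1 hint2
    intro v hv
    have hv0 : 0 ≤ v := hv.1
    have : |v * δ| = c * v := by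
      rw [abs_mul, abs_of_nonneg hv0, hcdef]; ring
    calc sigmoid' a * Real.exp (-(c * v)) = sigmoid' a * Real.exp (-|v * δ|) := by rw [this]
      _ ≤ sigmoid' (a + v * δ) := key a (v * δ)
  have heval : (∫ v in (0:ℝ)..1, sigmoid' a * Real.exp (-(c * v)))
      = sigmoid' a * ∫ v in (0:ℝ)..1, Real.exp (-(c * v)) := by
    exact intervalIntegral.integral_const_mul _ _
  have hlb := exp_integral_lb hc0
  have hsp := (sigmoid'_pos a).le
  calc (1 + 2 * S)⁻¹ * sigmoid' a ≤ (1 + c)⁻¹ * sigmoid' a := by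
        apply mul_le_mul_of_nonneg_right _ hsp
        apply inv_anti₀ (by linarith) (by linarith)
    _ ≤ (∫ v in (0:ℝ)..1, Real.exp (-(c * v))) * sigmoid' a :=
        mul_le_mul_of_nonneg_right hlb hsp
    _ = ∫ v in (0:ℝ)..1, sigmoid' a * Real.exp (-(c * v)) := by rw [heval]; ring
    _ ≤ _ := hmono
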